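/- Let I = (f) be a principal ideal generated by a polynomial f over a valued field. Then the tropical hypersurface of I, defined as the intersection of Trop(g) over all g in I, equals Trop(f). -/

import Mathlib

open MvPolynomial

/-- The tropical polynomial of `p = ∑ a_ν x^ν`: `y ↦ min_{ν ∈ supp p} (val(a_ν) + y·ν)`. -/
noncomputable def trop {K : Type*} [Field K] {n : ℕ}
    (v : AddValuation K (WithTop ℝ)) (p : MvPolynomial (Fin n) K) (y : Fin n → ℝ) :
    WithTop ℝ :=
  p.support.inf fun ν => v (p.coeff ν) + ((∑ i, y i * (ν i : ℝ) : ℝ) : WithTop ℝ)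

/-- The tropical hypersurface of `p`: the locus where the minimum is attained at least
twice. -/
noncomputable def tropSet {K : Type*} [Field K] {n : ℕ}
    (v : AddValuation K (WithTop ℝ)) (p : MvPolynomial (Fin n) K) : Set (Fin n → ℝ) :=
  { y | ∃ ν ∈ p.support, ∃ η ∈ p.support, ν ≠ η ∧
      v (p.coeff ν) + ((∑ i, y i * (ν i : ℝ) : ℝ) : WithTop ℝ) = trop v p y ∧
      v (p.coeff η) + ((∑ i, y i * (η i : ℝ) : ℝ) : WithTop ℝ) = trop v p y }

namespace TropAux

variable {K : Type*} [Field K] {n : ℕ} (v : AddValuation K (WithTop ℝ))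

/-- The real-valued weight `y·ν`, as an element of `WithTop ℝ`. -/
noncomputable def wt (y : Fin n → ℝ) (ν : Fin n →₀ ℕ) : WithTop ℝ :=
  ((∑ i, y i * (ν i : ℝ) : ℝ) : WithTop ℝ)

lemma wt_ne_top (y : Fin n → ℝ) (ν : Fin n →₀ ℕ) : wt y ν ≠ ⊤ := WithTop.coe_ne_top

lemma wt_add (y : Fin n → ℝ) (ν μ : Fin n →₀ ℕ) : wt y (ν + μ) = wt y ν + wt y μ := by
  rw [wt, wt, wt, ← WithTop.coe_add, WithTop.coe_inj, ← Finset.sum_add_distrib]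
  refine Finset.sum_congr rfl fun i _ => ?_
  rw [Finsupp.add_apply]
  push_cast
  ring

lemma trop_eq (p : MvPolynomial (Fin n) K) (y : Fin n → ℝ) :
    trop v p y = p.support.inf fun ν => v (p.coeff ν) + wt y ν := rfl

lemma le_v_sum_add {ι : Type*} {s : Finset ι} {t : ι → K} {C d : WithTop ℝ}
    (hs : ∀ i ∈ s, C ≤ v (t i) + d) : C ≤ v (∑ i ∈ s, t i) + d := by
  classical
  induction s using Finset.induction_on with
  | empty => simp [AddValuation.map_zero]
  | @insert a s' hx ih =>
    rw [Finset.sum_insert hx]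
    have h1 : min (v (t a)) (v (∑ i ∈ s', t i)) ≤ v (t a + ∑ i ∈ s', t i) :=
      v.map_add _ _
    have h2 : C ≤ min (v (t a)) (v (∑ i ∈ s', t i)) + d := by
      rw [← min_add_add_right]
      exact le_min (hs a (Finset.mem_insert_self a s'))
        (ih fun i hi => hs i (Finset.mem_insert_of_mem hi))
    exact h2.trans (add_le_add_left h1 d)

lemma lt_v_sum_add {ι : Type*} {s : Finset ι} {t : ι → K} {C d : WithTop ℝ}
    (hC : C ≠ ⊤) (hs : ∀ i ∈ s, C < v (t i) + d) : C < v (∑ i ∈ s, t i) + d := by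
  classical
  induction s using Finset.induction_on with
  | empty => simp [AddValuation.map_zero, lt_top_iff_ne_top, hC]
  | @insert a s' hx ih =>
    rw [Finset.sum_insert hx]
    have h1 : min (v (t a)) (v (∑ i ∈ s', t i)) ≤ v (t a + ∑ i ∈ s', t i) :=
      v.map_add _ _
    have h2 : C < min (v (t a)) (v (∑ i ∈ s', t i)) + d := by
      rw [← min_add_add_right]
      exact lt_min (hs a (Finset.mem_insert_self a s'))
        (ih fun i hi => hs i (Finset.mem_insert_of_mem hi))
    exact h2.trans_le (add_le_add_left h1 d)

/-- Lower bound: every term of `h * f` has weight at least `trop h + trop f`. -/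
lemma lower (f h : MvPolynomial (Fin n) K) (y : Fin n → ℝ) (ξ : Fin n →₀ ℕ) :
    trop v h y + trop v f y ≤ v ((h * f).coeff ξ) + wt y ξ := by
  rw [MvPolynomial.coeff_mul]
  refine le_v_sum_add v fun p hp => ?_
  obtain hz | hz1 := eq_or_ne (h.coeff p.1) 0
  · simp [hz, AddValuation.map_zero]
  obtain hz | hz2 := eq_or_ne (f.coeff p.2) 0
  · simp [hz, AddValuation.map_zero]
  have hp1 : p.1 ∈ h.support := MvPolynomial.mem_support_iff.mpr hz1
  have hp2 : p.2 ∈ f.support := MvPolynomial.mem_support_iff.mpr hz2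
  have hsum : p.1 + p.2 = ξ := Finset.HasAntidiagonal.mem_antidiagonal.mp hp
  have : v (h.coeff p.1 * f.coeff p.2) + wt y ξ
      = (v (h.coeff p.1) + wt y p.1) + (v (f.coeff p.2) + wt y p.2) := by
    rw [v.map_mul, ← hsum, wt_add]
    abel
  rw [this]
  exact add_le_add (Finset.inf_le hp1) (Finset.inf_le hp2)

/-- If `(μ0, ν0)` is the unique minimizing decomposition, then `μ0 + ν0` attains
`trop h + trop f` in `h * f`. -/
lemma key (f h : MvPolynomial (Fin n) K) (y : Fin n → ℝ) (μ0 ν0 : Fin n →₀ ℕ)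
    (hμ0 : μ0 ∈ h.support) (hν0 : ν0 ∈ f.support)
    (hμm : v (h.coeff μ0) + wt y μ0 = trop v h y)
    (hνm : v (f.coeff ν0) + wt y ν0 = trop v f y)
    (huniq : ∀ a b : Fin n →₀ ℕ, a ∈ h.support → b ∈ f.support →
      v (h.coeff a) + wt y a = trop v h y → v (f.coeff b) + wt y b = trop v f y →
      a + b = μ0 + ν0 → a = μ0 ∧ b = ν0) :
    (μ0 + ν0) ∈ (h * f).support ∧
      v ((h * f).coeff (μ0 + ν0)) + wt y (μ0 + ν0) = trop v h y + trop v f y := by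
  classical
  have hmH : trop v h y ≠ ⊤ := by
    rw [← hμm]
    exact WithTop.add_ne_top.mpr
      ⟨v.ne_top_iff.mpr (MvPolynomial.mem_support_iff.mp hμ0), wt_ne_top y μ0⟩
  have hmF : trop v f y ≠ ⊤ := by
    rw [← hνm]
    exact WithTop.add_ne_top.mpr
      ⟨v.ne_top_iff.mpr (MvPolynomial.mem_support_iff.mp hν0), wt_ne_top y ν0⟩
  have hmHF : trop v h y + trop v f y ≠ ⊤ := WithTop.add_ne_top.mpr ⟨hmH, hmF⟩
  set η := μ0 + ν0 with hη
  have hp0 : (μ0, ν0) ∈ Finset.HasAntidiagonal.antidiagonal η := Finset.HasAntidiagonal.mem_antidiagonal.mpr rfl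
  -- value of the distinguished term
  have hterm : v (h.coeff μ0 * f.coeff ν0) + wt y η = trop v h y + trop v f y := by
    rw [v.map_mul, hη, wt_add, ← hμm, ← hνm]
    abel
  -- every other term is strictly bigger
  have hrest : ∀ p ∈ (Finset.HasAntidiagonal.antidiagonal η).erase (μ0, ν0),
      trop v h y + trop v f y < v (h.coeff p.1 * f.coeff p.2) + wt y η := by
    intro p hp
    have hpad := Finset.mem_of_mem_erase hp
    have hpne : p ≠ (μ0, ν0) := Finset.ne_of_mem_erase hp
    have hsum : p.1 + p.2 = η := Finset.HasAntidiagonal.mem_antidiagonal.mp hpad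
    obtain hz | hz1 := eq_or_ne (h.coeff p.1) 0
    · simp [hz, AddValuation.map_zero, lt_top_iff_ne_top, hmHF]
    obtain hz | hz2 := eq_or_ne (f.coeff p.2) 0
    · simp [hz, AddValuation.map_zero, lt_top_iff_ne_top, hmHF]
    have hp1 : p.1 ∈ h.support := MvPolynomial.mem_support_iff.mpr hz1
    have hp2 : p.2 ∈ f.support := MvPolynomial.mem_support_iff.mpr hz2
    have hval : v (h.coeff p.1 * f.coeff p.2) + wt y η
        = (v (h.coeff p.1) + wt y p.1) + (v (f.coeff p.2) + wt y p.2) := by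
      rw [v.map_mul, ← hsum, wt_add]
      abel
    rw [hval]
    have hH : trop v h y ≤ v (h.coeff p.1) + wt y p.1 := Finset.inf_le hp1
    have hF : trop v f y ≤ v (f.coeff p.2) + wt y p.2 := Finset.inf_le hp2
    -- if both were equalities, uniqueness would force p = (μ0, ν0)
    have hdisj : trop v h y < v (h.coeff p.1) + wt y p.1 ∨
        trop v f y < v (f.coeff p.2) + wt y p.2 := by
      by_contra hcon
      push_neg at hcon
      have e1 : v (h.coeff p.1) + wt y p.1 = trop v h y := le_antisymm hcon.1 hH
      have e2 : v (f.coeff p.2) + wt y p.2 = trop v f y := le_antisymm hcon.2 hF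
      obtain ⟨ea, eb⟩ := huniq p.1 p.2 hp1 hp2 e1 e2 hsum
      exact hpne (Prod.ext ea eb)
    rcases hdisj with hlt | hlt
    · calc trop v h y + trop v f y < (v (h.coeff p.1) + wt y p.1) + trop v f y :=
            WithTop.add_lt_add_right hmF hlt
        _ ≤ _ := add_le_add_right hF _
    · calc trop v h y + trop v f y < trop v h y + (v (f.coeff p.2) + wt y p.2) :=
            WithTop.add_lt_add_left hmH hlt
        _ ≤ _ := add_le_add_left hH _
  -- hence the valuation of the coefficient is exactly trop h + trop f
  have hcoeff : v ((h * f).coeff η) + wt y η = trop v h y + trop v f y := by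
    rw [MvPolynomial.coeff_mul, ← Finset.add_sum_erase _ _ hp0]
    have hvr : trop v h y + trop v f y
        < v (∑ p ∈ (Finset.HasAntidiagonal.antidiagonal η).erase (μ0, ν0), h.coeff p.1 * f.coeff p.2)
          + wt y η :=
      lt_v_sum_add v hmHF hrest
    have hlt : v (h.coeff μ0 * f.coeff ν0)
        < v (∑ p ∈ (Finset.HasAntidiagonal.antidiagonal η).erase (μ0, ν0), h.coeff p.1 * f.coeff p.2) := by
      rw [← WithTop.add_lt_add_iff_right (wt_ne_top y η), hterm]
      exact hvr
    rw [v.map_add_eq_of_lt_left hlt, hterm]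
  refine ⟨MvPolynomial.mem_support_iff.mpr fun hc => ?_, hcoeff⟩
  rw [hc, AddValuation.map_zero, top_add] at hcoeff
  exact hmHF hcoeff.symm

lemma tropSet_mul_subset (f h : MvPolynomial (Fin n) K) (hf : f ≠ 0) (hh : h ≠ 0) :
    tropSet v f ⊆ tropSet v (h * f) := by
  classical
  intro y hy
  obtain ⟨ν₁, hν₁, ν₂, hν₂, hne, he₁, he₂⟩ := hy
  -- the sets of minimizers
  set Sf := f.support.filter (fun ν => v (f.coeff ν) + wt y ν = trop v f y) with hSf
  set Sh := h.support.filter (fun μ => v (h.coeff μ) + wt y μ = trop v h y) with hSh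
  have hν₁S : ν₁ ∈ Sf := Finset.mem_filter.mpr ⟨hν₁, he₁⟩
  have hν₂S : ν₂ ∈ Sf := Finset.mem_filter.mpr ⟨hν₂, he₂⟩
  have hShne : Sh.Nonempty := by
    obtain ⟨μ, hμ, hμe⟩ := h.support.exists_mem_eq_inf
      (MvPolynomial.support_nonempty.mpr hh) (fun μ => v (h.coeff μ) + wt y μ)
    exact ⟨μ, Finset.mem_filter.mpr ⟨hμ, hμe.symm⟩⟩
  -- lexicographic extremizers
  obtain ⟨νm, hνmS, hνmin⟩ := Sf.exists_min_image toLex ⟨ν₁, hν₁S⟩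
  obtain ⟨νM, hνMS, hνmax⟩ := Sf.exists_max_image toLex ⟨ν₁, hν₁S⟩
  obtain ⟨μm, hμmS, hμmin⟩ := Sh.exists_min_image toLex hShne
  obtain ⟨μM, hμMS, hμmax⟩ := Sh.exists_max_image toLex hShne
  have hνmMne : νm ≠ νM := by
    intro hsame
    apply hne
    have h1 : toLex ν₁ = toLex νm :=
      le_antisymm (hsame ▸ hνmax ν₁ hν₁S) (hνmin ν₁ hν₁S)
    have h2 : toLex ν₂ = toLex νm :=
      le_antisymm (hsame ▸ hνmax ν₂ hν₂S) (hνmin ν₂ hν₂S)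
    exact toLex.injective (h1.trans h2.symm)
  have memS : ∀ {a : Fin n →₀ ℕ}, a ∈ Sh → a ∈ h.support ∧
      v (h.coeff a) + wt y a = trop v h y := fun ha => by
    have := Finset.mem_filter.mp ha; exact this
  have memSf : ∀ {b : Fin n →₀ ℕ}, b ∈ Sf → b ∈ f.support ∧
      v (f.coeff b) + wt y b = trop v f y := fun hb => by
    have := Finset.mem_filter.mp hb; exact this
  -- uniqueness for the min pair
  have huniq_min : ∀ a b : Fin n →₀ ℕ, a ∈ h.support → b ∈ f.support →
      v (h.coeff a) + wt y a = trop v h y → v (f.coeff b) + wt y b = trop v f y →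
      a + b = μm + νm → a = μm ∧ b = νm := by
    intro a b ha hb hae hbe hab
    have haS : a ∈ Sh := Finset.mem_filter.mpr ⟨ha, hae⟩
    have hbS : b ∈ Sf := Finset.mem_filter.mpr ⟨hb, hbe⟩
    have h1 : toLex μm ≤ toLex a := hμmin a haS
    have h2 : toLex νm ≤ toLex b := hνmin b hbS
    have hlex : toLex (a + b) = toLex a + toLex b := rfl
    have hlex' : toLex (μm + νm) = toLex μm + toLex νm := rfl
    have haμ : a = μm := by
      by_contra hne'
      have hlt : toLex μm < toLex a :=
        h1.lt_of_ne fun e => hne' (toLex.injective e.symm)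
      have : toLex (μm + νm) < toLex (a + b) := by
        rw [hlex, hlex']
        calc toLex μm + toLex νm < toLex a + toLex νm := add_lt_add_left hlt _
          _ ≤ toLex a + toLex b := add_le_add_right h2 _
      rw [hab] at this
      exact lt_irrefl _ this
    refine ⟨haμ, ?_⟩
    rw [haμ] at hab
    exact add_left_cancel hab
  -- uniqueness for the max pair
  have huniq_max : ∀ a b : Fin n →₀ ℕ, a ∈ h.support → b ∈ f.support →
      v (h.coeff a) + wt y a = trop v h y → v (f.coeff b) + wt y b = trop v f y →
      a + b = μM + νM → a = μM ∧ b = νM := by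
    intro a b ha hb hae hbe hab
    have haS : a ∈ Sh := Finset.mem_filter.mpr ⟨ha, hae⟩
    have hbS : b ∈ Sf := Finset.mem_filter.mpr ⟨hb, hbe⟩
    have h1 : toLex a ≤ toLex μM := hμmax a haS
    have h2 : toLex b ≤ toLex νM := hνmax b hbS
    have hlex : toLex (a + b) = toLex a + toLex b := rfl
    have hlex' : toLex (μM + νM) = toLex μM + toLex νM := rfl
    have haμ : a = μM := by
      by_contra hne'
      have hlt : toLex a < toLex μM :=
        h1.lt_of_ne fun e => hne' (toLex.injective e)
      have : toLex (a + b) < toLex (μM + νM) := by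
        rw [hlex, hlex']
        calc toLex a + toLex b < toLex μM + toLex b := add_lt_add_left hlt _
          _ ≤ toLex μM + toLex νM := add_le_add_right h2 _
      rw [hab] at this
      exact lt_irrefl _ this
    refine ⟨haμ, ?_⟩
    rw [haμ] at hab
    exact add_left_cancel hab
  obtain ⟨hηmem, hηval⟩ := key v f h y μm νm (memS hμmS).1 (memSf hνmS).1
    (memS hμmS).2 (memSf hνmS).2 huniq_min
  obtain ⟨hη'mem, hη'val⟩ := key v f h y μM νM (memS hμMS).1 (memSf hνMS).1
    (memS hμMS).2 (memSf hνMS).2 huniq_max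
  -- the two attaining exponents are distinct
  have hηne : μm + νm ≠ μM + νM := by
    intro e
    have hlt : toLex (μm + νm) < toLex (μM + νM) := by
      have h1 : toLex μm ≤ toLex μM := hμmax μm hμmS
      have h2 : toLex νm < toLex νM :=
        (hνmax νm hνmS).lt_of_ne fun e' => hνmMne (toLex.injective e')
      calc toLex μm + toLex νm ≤ toLex μM + toLex νm := add_le_add_left h1 _
        _ < toLex μM + toLex νM := add_lt_add_right h2 _
    rw [e] at hlt
    exact lt_irrefl _ hlt
  -- trop (h*f) y = trop h y + trop f y
  have htrop : trop v (h * f) y = trop v h y + trop v f y := by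
    refine le_antisymm ?_ ?_
    · rw [trop_eq]
      exact (Finset.inf_le hηmem).trans (le_of_eq hηval)
    · rw [trop_eq]
      exact Finset.le_inf fun ξ _ => lower v f h y ξ
  exact ⟨μm + νm, hηmem, μM + νM, hη'mem, hηne,
    by rw [htrop]; exact hηval, by rw [htrop]; exact hη'val⟩

end TropAux

/-- For a principal ideal `I = (f)`, the tropicalization
`Trop(I) = ⋂_{g ∈ I, g ≠ 0} Trop(g)` equals `Trop(f)`. -/
theorem stmt5 {K : Type*} [Field K] {n : ℕ}
    (v : AddValuation K (WithTop ℝ)) (f : MvPolynomial (Fin n) K) (hf : f ≠ 0) :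
    (⋂ g ∈ {g : MvPolynomial (Fin n) K | g ∈ Ideal.span {f} ∧ g ≠ 0},
      tropSet v g) = tropSet v f := by
  apply subset_antisymm
  · exact Set.iInter₂_subset f ⟨Ideal.mem_span_singleton_self f, hf⟩
  · refine Set.subset_iInter₂ fun g hg => ?_
    obtain ⟨hspan, hg0⟩ := hg
    obtain ⟨c, rfl⟩ := Ideal.mem_span_singleton'.mp hspan
    have hc : c ≠ 0 := fun h => hg0 (by rw [h, zero_mul])
    exact TropAux.tropSet_mul_subset v f c hf hc
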